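/- Let S be a semigroup, b,c ∈ S¹, ρ a congruence on S. Then ρ_{b,c} = ρ if and only if the class bρ is left cancellable and cρ is right cancellable in (S/ρ)¹. -/

import Mathlib

/-- Any product `x * ↑s * y` in `S¹ = WithOne S` with middle factor in `S` lies in `S`. -/
theorem exists_coe_eq {S : Type*} [Semigroup S] (x y : WithOne S) (s : S) :
    ∃ z : S, (z : WithOne S) = x * ↑s * y := by
  induction x using WithOne.recOneCoe with
  | one => induction y using WithOne.recOneCoe with
    | one => exact ⟨s, by simp⟩
    | coe b => exact ⟨s * b, by simp⟩
  | coe a => induction y using WithOne.recOneCoe with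
    | one => exact ⟨a * s, by simp⟩
    | coe b => exact ⟨a * s * b, by simp [mul_assoc]⟩

/-- The element `x s y ∈ S` for `x, y ∈ S¹`, `s ∈ S`. -/
noncomputable def sand3 {S : Type*} [Semigroup S] (x : WithOne S) (s : S) (y : WithOne S) : S :=
  (exists_coe_eq x y s).choose

theorem sand3_spec {S : Type*} [Semigroup S] (x : WithOne S) (s : S) (y : WithOne S) :
    (↑(sand3 x s y) : WithOne S) = x * ↑s * y :=
  (exists_coe_eq x y s).choose_spec

/-- `sand b c s = b s c ∈ S` for `b, c ∈ S¹`, `s ∈ S`. -/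
noncomputable def sand {S : Type*} [Semigroup S] (b c : WithOne S) (s : S) : S := sand3 b s c

/-- `ρ_{b,c} = ρ` iff the class `bρ` is left cancellable and the class `cρ` is right
cancellable in `(S/ρ)¹` (cancellation being tested on classes of elements of `S`). -/
theorem rho_bc_eq_rho_iff {S : Type*} [Semigroup S]
    (b c : WithOne S) (ρ : S → S → Prop) (hequiv : Equivalence ρ)
    (hcomp : ∀ s t u v : S, ρ s t → ρ u v → ρ (s * u) (t * v)) :
    (∀ s t : S, ρ (sand b c s) (sand b c t) ↔ ρ s t) ↔
      ((∀ s t : S, ρ (sand b 1 s) (sand b 1 t) → ρ s t) ∧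
        (∀ s t : S, ρ (sand 1 c s) (sand 1 c t) → ρ s t)) := by
  -- decomposition lemma
  have hdecomp : ∀ s : S, sand b c s = sand 1 c (sand b 1 s) := by
    intro s
    rw [← WithOne.coe_inj]
    unfold sand
    rw [sand3_spec, sand3_spec, sand3_spec]
    simp [mul_assoc]
  have hdecomp2 : ∀ s : S, sand b c s = sand b 1 (sand 1 c s) := by
    intro s
    rw [← WithOne.coe_inj]
    unfold sand
    rw [sand3_spec, sand3_spec, sand3_spec]
    simp [mul_assoc]
  have hmul : ∀ (x y : WithOne S) (u v : S), ρ u v → ρ (sand x y u) (sand x y v) := by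
    intro x y u v huv
    have key : ∀ w z : S, (↑w : WithOne S) = x * ↑u * y → (↑z : WithOne S) = x * ↑v * y →
        ρ w z := by
      induction x using WithOne.recOneCoe with
      | one => induction y using WithOne.recOneCoe with
        | one => intro w z hw hz; simp at hw hz
                 rw [hw, hz]; exact huv
        | coe q => intro w z hw hz; simp at hw hz
                   rw [← WithOne.coe_mul, WithOne.coe_inj] at hw hz
                   rw [hw, hz]; exact hcomp _ _ _ _ huv (hequiv.refl q)
      | coe p => induction y using WithOne.recOneCoe with
        | one => intro w z hw hz; simp at hw hz
                 rw [← WithOne.coe_mul, WithOne.coe_inj] at hw hz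
                 rw [hw, hz]; exact hcomp _ _ _ _ (hequiv.refl p) huv
        | coe q => intro w z hw hz
                   rw [← WithOne.coe_mul, ← WithOne.coe_mul, WithOne.coe_inj] at hw hz
                   rw [hw, hz]
                   exact hcomp _ _ _ _ (hcomp _ _ _ _ (hequiv.refl p) huv) (hequiv.refl q)
    exact key _ _ (sand3_spec x u y) (sand3_spec x v y)
  constructor
  · intro H
    constructor
    · intro s t h
      exact (H s t).mp (by rw [hdecomp s, hdecomp t]; exact hmul 1 c _ _ h)
    · intro s t h
      apply (H s t).mp
      rw [hdecomp2 s, hdecomp2 t]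
      exact hmul b 1 _ _ h
  · intro ⟨hL, hR⟩ s t
    constructor
    · intro h
      rw [hdecomp s, hdecomp t] at h
      exact hL _ _ (hR _ _ h)
    · intro h
      rw [hdecomp s, hdecomp t]
      exact hmul 1 c _ _ (hmul b 1 _ _ h)
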